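/- With A(V,S) the quotient of the nonunital tensor algebra T(V)_+ by the ideal I(S) as in the context, the set of algebra automorphisms of A(V,S) that map the degree-1 subspace V onto itself equals GL(V)_S = {g ∈ GL(V) : g^{⊗r}(S) = S} (acting on A(V,S) via the induced action on T(V)_+). That is, {σ ∈ Aut(A(V,S)) : σ(V) = V} = GL(V)_S. -/

import Mathlib

open scoped TensorProduct

private lemma mapInvAux {F V : Type*} [Field F] [AddCommGroup V] [Module F V]
    (g : V ≃ₗ[F] V) {n : ℕ} (x : ⨂[F]^n V) :
    PiTensorProduct.map (fun _ : Fin n => (g : V →ₗ[F] V))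
      (PiTensorProduct.map (fun _ : Fin n => (g.symm : V →ₗ[F] V)) x) = x := by
  rw [← LinearMap.comp_apply, ← PiTensorProduct.map_comp]
  have h : (fun _ : Fin n => (g : V →ₗ[F] V) ∘ₗ (g.symm : V →ₗ[F] V))
      = fun _ : Fin n => LinearMap.id := by
    funext i; ext v; simp
  rw [h, PiTensorProduct.map_id, LinearMap.id_apply]

private lemma mapGMulAux {F V : Type*} [Field F] [AddCommGroup V] [Module F V]
    (g : V →ₗ[F] V) {i j : ℕ} (a : ⨂[F]^i V) (b : ⨂[F]^j V) :
    PiTensorProduct.map (fun _ : Fin (i + j) => g)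
      (GradedMonoid.GMul.mul (A := fun n => ⨂[F]^n V) a b) =
    GradedMonoid.GMul.mul (A := fun n => ⨂[F]^n V)
      (PiTensorProduct.map (fun _ : Fin i => g) a)
      (PiTensorProduct.map (fun _ : Fin j => g) b) := by
  rw [TensorPower.gMul_def, TensorPower.gMul_def]
  induction a using PiTensorProduct.induction_on with
  | add x y hx hy =>
    simp only [map_add, TensorProduct.add_tmul, hx, hy]
  | smul_tprod c u =>
    induction b using PiTensorProduct.induction_on with
    | add x y hx hy =>
      simp only [map_add, TensorProduct.tmul_add, hx, hy]
    | smul_tprod d w =>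
      simp only [TensorProduct.tmul_smul, ← TensorProduct.smul_tmul', map_smul,
        PiTensorProduct.map_tprod]
      have h1 := TensorPower.tprod_mul_tprod F u w
      have h2 := TensorPower.tprod_mul_tprod F (fun p => g (u p)) (fun p => g (w p))
      rw [TensorPower.gMul_def] at h1 h2
      rw [h1, h2, PiTensorProduct.map_tprod]
      have h3 : (fun k => g (Fin.append u w k))
          = Fin.append (fun p => g (u p)) fun p => g (w p) := by
        funext k
        refine Fin.addCases (fun p => ?_) (fun p => ?_) k
        · rw [Fin.append_left, Fin.append_left]
        · rw [Fin.append_right, Fin.append_right]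
      rw [h3]

/-- **Proposition 1** (tensor case, Gordeev–Popov): let `F` be a field, `V` a nonzero
finite-dimensional `F`-vector space, `r > 1` and `S ⊆ V^{⊗r}` a linear subspace.  Let
`A = A(V,S) = T(V)_+/I(S)` where `I(S) = S ⊕ (⊕_{i>r} V^{⊗i})`; concretely, `A` is the
algebra whose underlying space is the direct sum of the images of the maps
`ι i : V^{⊗i} → A` for `1 ≤ i ≤ r` (injective for `i < r`, with kernel `S` for `i = r`),
multiplication being induced from the tensor product (and vanishing above degree `r`).
Then the automorphisms of `A` mapping the degree-one subspace `V = ι 1 (V^{⊗1})` onto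
itself are exactly those induced by elements of
`GL(V)_S = {g ∈ GL(V) : g^{⊗r}(S) = S}` acting by `g^{⊗i}` on each graded piece. -/
theorem stmt3 {F V A : Type*} [Field F]
    [AddCommGroup V] [Module F V] [FiniteDimensional F V] [Nontrivial V]
    [AddCommGroup A] [Module F A]
    (r : ℕ) (hr : 1 < r)
    (S : Submodule F (⨂[F]^r V))
    (mul : A →ₗ[F] A →ₗ[F] A)
    (ι : ∀ i : ℕ, (⨂[F]^i V) →ₗ[F] A)
    (hinj : ∀ i : ℕ, 1 ≤ i → i < r → Function.Injective (ι i))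
    (hker : LinearMap.ker (ι r) = S)
    (hinternal : DirectSum.IsInternal
      (fun i : ℕ => if i ∈ Finset.Icc 1 r then LinearMap.range (ι i) else ⊥))
    (hmul : ∀ i ∈ Finset.Icc 1 r, ∀ j ∈ Finset.Icc 1 r,
      ∀ (x : ⨂[F]^i V) (y : ⨂[F]^j V),
        mul (ι i x) (ι j y) =
          if i + j ≤ r then
            ι (i + j) (GradedMonoid.GMul.mul (A := fun n => ⨂[F]^n V) x y)
          else 0) :
    {σ : A ≃ₗ[F] A |
        (∀ x y : A, σ (mul x y) = mul (σ x) (σ y)) ∧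
        Submodule.map σ.toLinearMap (LinearMap.range (ι 1)) = LinearMap.range (ι 1)} =
    {σ : A ≃ₗ[F] A |
        ∃ g : V ≃ₗ[F] V,
          Submodule.map (PiTensorProduct.map fun _ : Fin r => (g : V →ₗ[F] V)) S = S ∧
          ∀ i ∈ Finset.Icc 1 r, ∀ x : ⨂[F]^i V,
            σ (ι i x) = ι i (PiTensorProduct.map (fun _ : Fin i => (g : V →ₗ[F] V)) x)} := by
  have h1r : (1 : ℕ) ∈ Finset.Icc 1 r := by
    simp only [Finset.mem_Icc]; omega
  have hrr : r ∈ Finset.Icc 1 r := by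
    simp only [Finset.mem_Icc]; omega
  ext σ
  simp only [Set.mem_setOf_eq]
  constructor
  · rintro ⟨hσmul, hV⟩
    set e := PiTensorProduct.subsingletonEquiv (R := F) (s := fun _ : Fin 1 => V) (0 : Fin 1) with he
    have hinj1 : Function.Injective (ι 1) := hinj 1 le_rfl hr
    set ι1' := LinearEquiv.ofInjective (ι 1) hinj1 with hι1'
    set σ' := (σ.submoduleMap (LinearMap.range (ι 1))).trans
      (LinearEquiv.ofEq _ _ hV) with hσ'
    set G := (ι1'.trans σ').trans ι1'.symm with hGdef
    have hG : ∀ t : ⨂[F]^1 V, ι 1 (G t) = σ (ι 1 t) := by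
      intro t
      have h1 : (ι1' (G t) : A) = ι 1 (G t) := by
        rw [hι1']; exact LinearEquiv.ofInjective_apply _ _
      have h2 : ι1' (G t) = σ' (ι1' t) := by
        rw [hGdef]; simp
      have h3 : (σ' (ι1' t) : A) = σ ((ι1' t : A)) := by
        rw [hσ']
        simp only [LinearEquiv.trans_apply]
        rw [LinearEquiv.coe_ofEq_apply, LinearEquiv.submoduleMap_apply]
      have h4 : (ι1' t : A) = ι 1 t := by
        rw [hι1']; exact LinearEquiv.ofInjective_apply _ _
      rw [← h1, h2, h3, h4]
    set g : V ≃ₗ[F] V := (e.symm.trans G).trans e with hgdef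
    have hGg : ∀ t : ⨂[F]^1 V,
        G t = PiTensorProduct.map (fun _ : Fin 1 => (g : V →ₗ[F] V)) t := by
      intro t
      induction t using PiTensorProduct.induction_on with
      | add x y hx hy => rw [map_add, map_add, hx, hy]
      | smul_tprod c v =>
        rw [map_smul, map_smul]
        congr 1
        rw [PiTensorProduct.map_tprod]
        have hv : v = fun _ : Fin 1 => v 0 := funext fun i => by
          rw [Subsingleton.elim i 0]
        have hGt : G ((PiTensorProduct.tprod F) v) = e.symm (g (v 0)) := by
          have : g (v 0) = e (G (e.symm (v 0))) := by rw [hgdef]; simp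
          rw [this, LinearEquiv.symm_apply_apply]
          congr 1
          rw [LinearEquiv.eq_symm_apply, he, PiTensorProduct.subsingletonEquiv_apply_tprod]
        rw [hGt, LinearEquiv.symm_apply_eq, he, PiTensorProduct.subsingletonEquiv_apply_tprod]
        simp
    have key1 : ∀ v : Fin 1 → V,
        σ (ι 1 ((PiTensorProduct.tprod F) v))
          = ι 1 ((PiTensorProduct.tprod F) fun k => g (v k)) := by
      intro v
      rw [← hG, hGg, PiTensorProduct.map_tprod]
      rfl
    have keyP : ∀ i, 1 ≤ i → i ≤ r → ∀ v : Fin i → V,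
        σ (ι i ((PiTensorProduct.tprod F) v))
          = ι i ((PiTensorProduct.tprod F) fun k => g (v k)) := by
      intro i hi
      induction i, hi using Nat.le_induction with
      | base => intro _ v; exact key1 v
      | succ n hn IH =>
        intro hn1 v
        have hnr : n ≤ r := by omega
        have hnIcc : n ∈ Finset.Icc 1 r := by simp only [Finset.mem_Icc]; omega
        have hv : (PiTensorProduct.tprod F) v
            = GradedMonoid.GMul.mul (A := fun m => ⨂[F]^m V)
              ((PiTensorProduct.tprod F) (Fin.init v))
              ((PiTensorProduct.tprod F) fun _ : Fin 1 => v (Fin.last n)) := by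
          rw [TensorPower.tprod_mul_tprod]
          congr 1
          rw [Fin.append_right_eq_snoc, Fin.snoc_init_self]
        have hm := hmul n hnIcc 1 h1r ((PiTensorProduct.tprod F) (Fin.init v))
          ((PiTensorProduct.tprod F) fun _ : Fin 1 => v (Fin.last n))
        rw [if_pos hn1] at hm
        rw [hv, ← hm, hσmul, IH hnr, key1, hmul n hnIcc 1 h1r, if_pos hn1,
          TensorPower.tprod_mul_tprod]
        congr 1
        have : (fun k => g (v k)) = Fin.snoc (fun k : Fin n => g (Fin.init v k))
            (g (v (Fin.last n))) := by
          have := Fin.comp_snoc (fun x => g x) (Fin.init v) (v (Fin.last n))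
          rw [Fin.snoc_init_self] at this
          exact this
        rw [this, Fin.append_right_eq_snoc]
    have key : ∀ i ∈ Finset.Icc 1 r, ∀ x : ⨂[F]^i V,
        σ (ι i x) = ι i (PiTensorProduct.map (fun _ : Fin i => (g : V →ₗ[F] V)) x) := by
      intro i hi x
      rw [Finset.mem_Icc] at hi
      induction x using PiTensorProduct.induction_on with
      | add x y hx hy => rw [map_add, map_add, hx, hy, map_add, map_add]
      | smul_tprod c v =>
        simp only [map_smul, LinearMap.map_smul, LinearEquiv.map_smul]
        rw [keyP i hi.1 hi.2 v, PiTensorProduct.map_tprod]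
        rfl
    refine ⟨g, ?_, key⟩
    have hSr : ∀ t : ⨂[F]^r V, t ∈ S ↔
        PiTensorProduct.map (fun _ : Fin r => (g : V →ₗ[F] V)) t ∈ S := by
      intro t
      rw [← hker, LinearMap.mem_ker, LinearMap.mem_ker, ← key r hrr t]
      constructor
      · intro h; rw [h, map_zero]
      · intro h
        exact σ.injective (by rw [h, map_zero])
    apply le_antisymm
    · rintro x ⟨t, ht, rfl⟩
      exact (hSr t).1 ht
    · intro s hs
      refine ⟨PiTensorProduct.map (fun _ : Fin r => (g.symm : V →ₗ[F] V)) s, ?_, mapInvAux g s⟩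
      refine (hSr _).mpr ?_
      rw [mapInvAux g s]
      exact hs
  · rintro ⟨g, hS, hσ⟩
    have htop : (⨆ i, (if i ∈ Finset.Icc 1 r then LinearMap.range (ι i) else ⊥)) = ⊤ :=
      hinternal.submodule_iSup_eq_top
    constructor
    · intro x y
      have hx : x ∈ ⨆ i, (if i ∈ Finset.Icc 1 r then LinearMap.range (ι i) else ⊥) := by
        rw [htop]; trivial
      refine Submodule.iSup_induction (motive := fun x =>
          ∀ y, σ (mul x y) = mul (σ x) (σ y)) _ hx ?_ ?_ ?_ y
      · intro i x hxi y
        by_cases hi : i ∈ Finset.Icc 1 r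
        · rw [if_pos hi] at hxi
          obtain ⟨a, rfl⟩ := hxi
          have hy : y ∈ ⨆ j, (if j ∈ Finset.Icc 1 r then LinearMap.range (ι j) else ⊥) := by
            rw [htop]; trivial
          refine Submodule.iSup_induction (motive := fun y =>
              σ (mul (ι i a) y) = mul (σ (ι i a)) (σ y)) _ hy ?_ ?_ ?_
          · intro j y hyj
            by_cases hj : j ∈ Finset.Icc 1 r
            · rw [if_pos hj] at hyj
              obtain ⟨b, rfl⟩ := hyj
              rw [hmul i hi j hj a b, hσ i hi a, hσ j hj b, hmul i hi j hj]
              by_cases hij : i + j ≤ r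
              · have hijIcc : i + j ∈ Finset.Icc 1 r := by
                  rw [Finset.mem_Icc] at *; omega
                rw [if_pos hij, if_pos hij, hσ (i + j) hijIcc, mapGMulAux]
              · rw [if_neg hij, if_neg hij, map_zero]
            · rw [if_neg hj] at hyj
              rw [Submodule.mem_bot] at hyj
              subst hyj
              simp
          · simp
          · intro y1 y2 h1 h2
            simp only [map_add, h1, h2]
        · rw [if_neg hi] at hxi
          rw [Submodule.mem_bot] at hxi
          subst hxi
          simp
      · intro y; simp
      · intro x1 x2 h1 h2 y
        simp only [map_add, LinearMap.add_apply, h1, h2, LinearMap.map_add₂]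
    · apply le_antisymm
      · rintro x ⟨y, ⟨t, rfl⟩, rfl⟩
        rw [LinearEquiv.coe_coe, hσ 1 h1r t]
        exact ⟨_, rfl⟩
      · rintro x ⟨t, rfl⟩
        refine ⟨ι 1 (PiTensorProduct.map (fun _ : Fin 1 => (g.symm : V →ₗ[F] V)) t),
          ⟨_, rfl⟩, ?_⟩
        rw [LinearEquiv.coe_coe, hσ 1 h1r, mapInvAux g t]
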